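/- arXiv:1609.06016 — 3 statements merged into one kernel-verified Lean document; each statement's English description precedes it below -/
import Mathlib

section
/- Let S : H → H be nonexpansive with a fixed point p, Q an α-contraction (α ∈ (0,1)), B a strongly positive self-adjoint bounded linear operator with constant γ̄ > 0, γ > 0 with γα < γ̄, and {αₙ} ⊂ (0,1) with ‖I − αₙB‖ ≤ 1 − αₙγ̄ for all n. If {xₙ} satisfies the implicit midpoint recursion xₙ₊₁ = αₙγQ(xₙ) + (I − αₙB)S((xₙ + xₙ₊₁)/2), then for all n: ‖xₙ₊₁ − p‖ ≤ max{‖x₀ − p‖, ‖γQ(p) − Bp‖/(γ̄ − γα)}; in particular {xₙ} is bounded. -/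
open scoped RealInnerProductSpace

theorem stmt_9 {H : Type*} [NormedAddCommGroup H] [InnerProductSpace ℝ H] [CompleteSpace H]
    (S : H → H) (hS : ∀ x y : H, ‖S x - S y‖ ≤ ‖x - y‖)
    (p : H) (hp : S p = p)
    (Q : H → H) (α : ℝ) (hα0 : 0 < α) (hα1 : α < 1)
    (hQ : ∀ x y : H, ‖Q x - Q y‖ ≤ α * ‖x - y‖)
    (B : H →L[ℝ] H) (hBsa : IsSelfAdjoint B)
    (γbar : ℝ) (hγbar : 0 < γbar)
    (hBpos : ∀ x : H, ⟪B x, x⟫ ≥ γbar * ‖x‖ ^ 2)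
    (γ : ℝ) (hγ0 : 0 < γ) (hγ : γ * α < γbar)
    (a : ℕ → ℝ) (ha : ∀ n, a n ∈ Set.Ioo (0 : ℝ) 1)
    (haB : ∀ n, ‖(1 : H →L[ℝ] H) - a n • B‖ ≤ 1 - a n * γbar)
    (x : ℕ → H)
    (hrec : ∀ n, x (n + 1)
      = a n • (γ • Q (x n)) + ((1 : H →L[ℝ] H) - a n • B) (S ((2 : ℝ)⁻¹ • (x n + x (n + 1))))) :
    (∀ n, ‖x (n + 1) - p‖ ≤ max ‖x 0 - p‖ (‖γ • Q p - B p‖ / (γbar - γ * α))) ∧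
    ∃ M : ℝ, ∀ n, ‖x n‖ ≤ M := by
  set M := max ‖x 0 - p‖ (‖γ • Q p - B p‖ / (γbar - γ * α)) with hMdef
  have hga : 0 < γbar - γ * α := by linarith
  have hCM : ‖γ • Q p - B p‖ ≤ (γbar - γ * α) * M := by
    have := le_max_right ‖x 0 - p‖ (‖γ • Q p - B p‖ / (γbar - γ * α))
    rw [div_le_iff₀ hga] at this
    linarith [this]
  have hall : ∀ n, ‖x n - p‖ ≤ M := by
    intro n
    induction n with
    | zero => exact le_max_left _ _
    | succ n ih =>
      set aa := a n with haa
      obtain ⟨haa0, haa1⟩ := ha n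
      have h1 : 0 ≤ 1 - aa * γbar := le_trans (norm_nonneg _) (haB n)
      set u := ‖x n - p‖ with hu
      set v := ‖x (n + 1) - p‖ with hv
      set m := (2 : ℝ)⁻¹ • (x n + x (n + 1)) with hm
      have hmid : ‖S m - p‖ ≤ (u + v) / 2 := by
        have h2 : ‖S m - p‖ ≤ ‖m - p‖ := by
          conv_lhs => rw [← hp]
          exact hS m p
        have h3 : m - p = (2 : ℝ)⁻¹ • ((x n - p) + (x (n + 1) - p)) := by
          rw [hm]; module
        have h4 : ‖m - p‖ ≤ (u + v) / 2 := by
          rw [h3, norm_smul]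
          have := norm_add_le (x n - p) (x (n + 1) - p)
          simp only [norm_inv, Real.norm_ofNat]
          rw [hu, hv]
          linarith [this]
        linarith
      have hcontr : ‖γ • Q (x n) - B p‖ ≤ γ * α * u + ‖γ • Q p - B p‖ := by
        have t1 : ‖γ • Q (x n) - B p‖ ≤ ‖γ • Q (x n) - γ • Q p‖ + ‖γ • Q p - B p‖ :=
          norm_sub_le_norm_sub_add_norm_sub _ _ _
        have t2 : ‖γ • Q (x n) - γ • Q p‖ = γ * ‖Q (x n) - Q p‖ := by
          rw [← smul_sub, norm_smul, Real.norm_eq_abs, abs_of_pos hγ0]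
        have t3 : ‖Q (x n) - Q p‖ ≤ α * u := hQ (x n) p
        nlinarith
      have hkeyeq : x (n + 1) - p
          = aa • (γ • Q (x n) - B p) + ((1 : H →L[ℝ] H) - aa • B) (S m - p) := by
        conv_lhs => rw [hrec n]
        simp only [ContinuousLinearMap.sub_apply, ContinuousLinearMap.smul_apply,
          ContinuousLinearMap.one_apply, map_sub, smul_sub]
        abel
      have hkey : v ≤ aa * (γ * α * u + ‖γ • Q p - B p‖) + (1 - aa * γbar) * ((u + v) / 2) := by
        have n1 : v ≤ ‖aa • (γ • Q (x n) - B p)‖ + ‖((1 : H →L[ℝ] H) - aa • B) (S m - p)‖ := by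
          rw [hv, hkeyeq]; exact norm_add_le _ _
        have n2 : ‖aa • (γ • Q (x n) - B p)‖ = aa * ‖γ • Q (x n) - B p‖ := by
          rw [norm_smul, Real.norm_eq_abs, abs_of_pos haa0]
        have n3 : ‖((1 : H →L[ℝ] H) - aa • B) (S m - p)‖ ≤ (1 - aa * γbar) * ‖S m - p‖ := by
          calc ‖((1 : H →L[ℝ] H) - aa • B) (S m - p)‖
              ≤ ‖(1 : H →L[ℝ] H) - aa • B‖ * ‖S m - p‖ := ContinuousLinearMap.le_opNorm _ _
            _ ≤ (1 - aa * γbar) * ‖S m - p‖ :=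
                mul_le_mul_of_nonneg_right (haB n) (norm_nonneg _)
        have n4 : (1 - aa * γbar) * ‖S m - p‖ ≤ (1 - aa * γbar) * ((u + v) / 2) :=
          mul_le_mul_of_nonneg_left hmid h1
        have n5 : aa * ‖γ • Q (x n) - B p‖ ≤ aa * (γ * α * u + ‖γ • Q p - B p‖) :=
          mul_le_mul_of_nonneg_left hcontr (le_of_lt haa0)
        linarith
      have hu0 : 0 ≤ u := norm_nonneg _
      nlinarith [mul_le_mul_of_nonneg_left ih (mul_nonneg (mul_nonneg haa0.le hγ0.le) hα0.le),
        mul_le_mul_of_nonneg_left hCM haa0.le,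
        mul_le_mul_of_nonneg_left ih h1, mul_pos haa0 hγbar]
  refine ⟨fun n => hall (n + 1), ⟨M + ‖p‖, fun n => ?_⟩⟩
  calc ‖x n‖ ≤ ‖x n - p‖ + ‖p‖ := by simpa using norm_add_le (x n - p) p
    _ ≤ M + ‖p‖ := by linarith [hall n]
end

section
/- Let {xₙ} be a sequence in a real Hilbert space H, S : H → H nonexpansive, Q an α-contraction, B strongly positive self-adjoint bounded linear with constant γ̄, γ > 0 with γα < γ̄, and {αₙ} ⊂ (0,1) satisfying αₙ → 0, Σαₙ = ∞, and Σ|αₙ − αₙ₋₁| < ∞. If xₙ₊₁ = αₙγQ(xₙ) + (I − αₙB)S((xₙ + xₙ₊₁)/2) and {xₙ} is bounded and asymptotically regular (‖xₙ₊₁ − xₙ‖ → 0), then ‖xₙ − Sxₙ‖ → 0. -/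
open scoped RealInnerProductSpace

theorem stmt_11 {H : Type*} [NormedAddCommGroup H] [InnerProductSpace ℝ H] [CompleteSpace H]
    (S : H → H) (hS : ∀ x y : H, ‖S x - S y‖ ≤ ‖x - y‖)
    (Q : H → H) (α : ℝ) (hα0 : 0 < α) (hα1 : α < 1)
    (hQ : ∀ x y : H, ‖Q x - Q y‖ ≤ α * ‖x - y‖)
    (B : H →L[ℝ] H) (hBsa : IsSelfAdjoint B)
    (γbar : ℝ) (hγbar : 0 < γbar)
    (hBpos : ∀ x : H, ⟪B x, x⟫ ≥ γbar * ‖x‖ ^ 2)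
    (γ : ℝ) (hγ0 : 0 < γ) (hγ : γ * α < γbar)
    (a : ℕ → ℝ) (ha : ∀ n, a n ∈ Set.Ioo (0 : ℝ) 1)
    (ha0 : Filter.Tendsto a Filter.atTop (nhds 0))
    (hasum : ¬ Summable a)
    (hadiff : Summable (fun n => |a (n + 1) - a n|))
    (x : ℕ → H)
    (hrec : ∀ n, x (n + 1)
      = a n • (γ • Q (x n)) + ((1 : H →L[ℝ] H) - a n • B) (S ((2 : ℝ)⁻¹ • (x n + x (n + 1)))))
    (hbdd : ∃ M : ℝ, ∀ n, ‖x n‖ ≤ M)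
    (hasreg : Filter.Tendsto (fun n => ‖x (n + 1) - x n‖) Filter.atTop (nhds 0)) :
    Filter.Tendsto (fun n => ‖x n - S (x n)‖) Filter.atTop (nhds 0) := by
  obtain ⟨M, hM⟩ := hbdd
  have hM0 : 0 ≤ M := le_trans (norm_nonneg _) (hM 0)
  set C : ℝ := γ * (‖Q 0‖ + α * M) + ‖B‖ * (‖S 0‖ + M) with hC
  have key : ∀ n, ‖x n - S (x n)‖ ≤ (3/2) * ‖x (n+1) - x n‖ + a n * C := by
    intro n
    set m : H := (2:ℝ)⁻¹ • (x n + x (n+1)) with hm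
    have hmnorm : ‖m‖ ≤ M := by
      have : ‖m‖ ≤ (2:ℝ)⁻¹ * (‖x n‖ + ‖x (n+1)‖) := by
        rw [hm, norm_smul]
        simp only [norm_inv, Real.norm_ofNat]
        gcongr
        exact norm_add_le _ _
      linarith [hM n, hM (n+1)]
    have hdiff : x (n+1) - S m = a n • (γ • Q (x n) - B (S m)) := by
      rw [hrec n]
      simp only [ContinuousLinearMap.sub_apply, ContinuousLinearMap.one_apply,
        ContinuousLinearMap.smul_apply, smul_sub, ← hm]
      abel
    have hQb : ‖Q (x n)‖ ≤ ‖Q 0‖ + α * M := by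
      have := hQ (x n) 0
      have h2 : ‖Q (x n)‖ - ‖Q 0‖ ≤ α * ‖x n - 0‖ := le_trans (norm_sub_norm_le _ _) this
      have h3 : α * ‖x n - 0‖ ≤ α * M := by
        rw [sub_zero]; exact mul_le_mul_of_nonneg_left (hM n) hα0.le
      linarith
    have hSb : ‖S m‖ ≤ ‖S 0‖ + M := by
      have := hS m 0
      have h2 : ‖S m‖ - ‖S 0‖ ≤ ‖m - 0‖ := le_trans (norm_sub_norm_le _ _) this
      rw [sub_zero] at h2
      linarith
    have hBb : ‖B (S m)‖ ≤ ‖B‖ * (‖S 0‖ + M) := by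
      calc ‖B (S m)‖ ≤ ‖B‖ * ‖S m‖ := B.le_opNorm _
        _ ≤ ‖B‖ * (‖S 0‖ + M) := by gcongr
    have hinner : ‖γ • Q (x n) - B (S m)‖ ≤ C := by
      calc ‖γ • Q (x n) - B (S m)‖ ≤ ‖γ • Q (x n)‖ + ‖B (S m)‖ := norm_sub_le _ _
        _ ≤ γ * (‖Q 0‖ + α * M) + ‖B‖ * (‖S 0‖ + M) := by
            rw [norm_smul, Real.norm_eq_abs, abs_of_pos hγ0]
            gcongr
        _ = C := rfl
    have h1 : ‖x (n+1) - S m‖ ≤ a n * C := by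
      rw [hdiff, norm_smul, Real.norm_eq_abs, abs_of_pos (ha n).1]
      exact mul_le_mul_of_nonneg_left hinner (ha n).1.le
    have h2 : ‖S m - S (x n)‖ ≤ (2:ℝ)⁻¹ * ‖x (n+1) - x n‖ := by
      have hmx : m - x n = (2:ℝ)⁻¹ • (x (n+1) - x n) := by
        rw [hm]; module
      calc ‖S m - S (x n)‖ ≤ ‖m - x n‖ := hS _ _
        _ = (2:ℝ)⁻¹ * ‖x (n+1) - x n‖ := by
            rw [hmx, norm_smul]; norm_num
    calc ‖x n - S (x n)‖
        ≤ ‖x n - x (n+1)‖ + ‖x (n+1) - S m‖ + ‖S m - S (x n)‖ := by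
          have := norm_add₃_le (a := x n - x (n+1)) (b := x (n+1) - S m) (c := S m - S (x n))
          simpa using this
      _ ≤ ‖x (n+1) - x n‖ + a n * C + (2:ℝ)⁻¹ * ‖x (n+1) - x n‖ := by
          rw [norm_sub_rev (x n)]
          gcongr
      _ = (3/2) * ‖x (n+1) - x n‖ + a n * C := by ring
  have hlim : Filter.Tendsto (fun n => (3/2) * ‖x (n+1) - x n‖ + a n * C)
      Filter.atTop (nhds 0) := by
    have h1 := hasreg.const_mul (3/2 : ℝ)
    have h2 := ha0.mul_const C
    simpa using h1.add h2
  exact squeeze_zero (fun n => norm_nonneg _) key hlim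
end

section
/- Let S : H → H be nonexpansive on a real Hilbert space H with Fix(S) ≠ ∅, Q an α-contraction (α ∈ (0,1)), and {αₙ} ⊂ (0,1) with αₙ → 0, Σαₙ = ∞, and Σ|αₙ − αₙ₋₁| < ∞. Then the sequence defined by the viscosity implicit midpoint rule xₙ₊₁ = αₙQ(xₙ) + (1 − αₙ)S((xₙ + xₙ₊₁)/2) converges strongly to the unique z ∈ Fix(S) satisfying ⟨(I − Q)z, x − z⟩ ≥ 0 for all x ∈ Fix(S). -/
open scoped RealInnerProductSpace

open Filter

section Helpers

lemma xu_lemma (t γ σ β : ℕ → ℝ) (ht : ∀ n, 0 ≤ t n)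
    (hγ0 : ∀ n, 0 ≤ γ n) (hγ1 : ∀ n, γ n ≤ 1) (hγs : ¬ Summable γ)
    (hσ : ∀ ε > 0, ∀ᶠ n in atTop, σ n ≤ ε)
    (hβ0 : ∀ n, 0 ≤ β n) (hβ : Summable β)
    (hrec : ∀ n, t (n+1) ≤ (1 - γ n) * t n + γ n * σ n + β n) :
    Tendsto t atTop (nhds 0) := by
  rw [Metric.tendsto_atTop]
  intro ε hε
  have hε4 : 0 < ε/4 := by linarith
  obtain ⟨N1, hN1⟩ := (hσ (ε/4) hε4).exists_forall_of_atTop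
  have htail : Tendsto (fun i => ∑' k, β (k + i)) atTop (nhds 0) := tendsto_sum_nat_add β
  obtain ⟨N2, hN2⟩ := (htail.eventually (eventually_le_nhds hε4)).exists_forall_of_atTop
  set N := max N1 N2 with hN
  have hβtail : ∑' k, β (k + N) ≤ ε/4 := hN2 N (le_max_right _ _)
  have key : ∀ n, t (N + n) ≤ (∏ k ∈ Finset.range n, (1 - γ (N + k))) * t N + ε/4
      + ∑ k ∈ Finset.range n, β (N + k) := by
    intro n
    induction n with
    | zero => simp; linarith [hε4]
    | succ n ih =>
      have h1 : 0 ≤ 1 - γ (N + n) := by linarith [hγ1 (N+n)]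
      have h2 := hrec (N + n)
      have h3 : σ (N + n) ≤ ε/4 := hN1 (N+n) (le_trans (le_max_left _ _) (Nat.le_add_right _ _))
      have h4 : γ (N+n) * σ (N+n) ≤ γ (N+n) * (ε/4) :=
        mul_le_mul_of_nonneg_left h3 (hγ0 _)
      have h5 : t (N + (n+1)) ≤ (1 - γ (N+n)) * t (N+n) + γ (N+n) * (ε/4) + β (N+n) := by
        have : N + (n+1) = (N + n) + 1 := by ring
        rw [this]; linarith
      have h6 : (1 - γ (N+n)) * t (N+n) ≤ (1 - γ (N+n)) *
          ((∏ k ∈ Finset.range n, (1 - γ (N + k))) * t N + ε/4 + ∑ k ∈ Finset.range n, β (N + k)) :=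
        mul_le_mul_of_nonneg_left ih h1
      rw [Finset.prod_range_succ, Finset.sum_range_succ]
      have hBnn : 0 ≤ ∑ k ∈ Finset.range n, β (N + k) :=
        Finset.sum_nonneg fun k _ => hβ0 _
      have hPnn : 0 ≤ ∏ k ∈ Finset.range n, (1 - γ (N + k)) :=
        Finset.prod_nonneg fun k _ => by linarith [hγ1 (N+k)]
      nlinarith [ht N, hγ0 (N+n), hγ1 (N+n), mul_nonneg hPnn (ht N)]
  have hprod : Tendsto (fun n => (∏ k ∈ Finset.range n, (1 - γ (N + k)))) atTop (nhds 0) := by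
    have hsum : Tendsto (fun n => ∑ k ∈ Finset.range n, γ (N + k)) atTop atTop := by
      have : ¬ Summable (fun k => γ (N + k)) := by
        intro h
        exact hγs (((summable_nat_add_iff N).1 (by simpa [Nat.add_comm] using h)))
      exact (not_summable_iff_tendsto_nat_atTop_of_nonneg (fun n => hγ0 _)).1 this
    have hb : ∀ n, ∏ k ∈ Finset.range n, (1 - γ (N + k))
        ≤ Real.exp (-(∑ k ∈ Finset.range n, γ (N + k))) := by
      intro n
      have heq : Real.exp (-∑ k ∈ Finset.range n, γ (N + k))
          = ∏ k ∈ Finset.range n, Real.exp (-(γ (N + k))) := by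
        rw [← Real.exp_sum]; congr 1; rw [← Finset.sum_neg_distrib]
      rw [heq]
      exact Finset.prod_le_prod
          (fun k _ => by linarith [hγ1 (N+k)])
          (fun k _ => by linarith [Real.add_one_le_exp (-(γ (N+k)))])
    have hexp : Tendsto (fun n => Real.exp (-(∑ k ∈ Finset.range n, γ (N + k)))) atTop (nhds 0) :=
      Real.tendsto_exp_neg_atTop_nhds_zero.comp hsum
    refine squeeze_zero (fun n => Finset.prod_nonneg fun k _ => by linarith [hγ1 (N+k)]) hb hexp
  have hprodt : Tendsto (fun n => (∏ k ∈ Finset.range n, (1 - γ (N + k))) * t N) atTop (nhds 0) := by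
    simpa using hprod.mul_const (t N)
  obtain ⟨N3, hN3⟩ := (hprodt.eventually (eventually_le_nhds hε4)).exists_forall_of_atTop
  refine ⟨N + N3, fun n hn => ?_⟩
  have hn' : N + (n - N) = n := by omega
  have h1 := key (n - N)
  rw [hn'] at h1
  have h2 : ∑ k ∈ Finset.range (n - N), β (N + k) ≤ ∑' k, β (k + N) := by
    have : ∀ k, β (N + k) = (fun k => β (k + N)) k := fun k => by rw [Nat.add_comm]
    simp_rw [this]
    exact Summable.sum_le_tsum _ (fun i _ => hβ0 _) ((summable_nat_add_iff N).2 hβ)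
  have h3 : (∏ k ∈ Finset.range (n - N), (1 - γ (N + k))) * t N ≤ ε/4 := hN3 _ (by omega)
  have h4 : 0 ≤ t n := ht n
  rw [Real.dist_eq, abs_of_nonneg (by linarith)]
  simp only [sub_zero]
  linarith

lemma ultra_lim_exists (f : ℕ → ℝ) (C : ℝ) (hf : ∀ n, |f n| ≤ C) (U : Ultrafilter ℕ) :
    ∃ L, |L| ≤ C ∧ Tendsto f (↑U) (nhds L) := by
  have h1 : (Ultrafilter.map f U : Filter ℝ) ≤ Filter.principal (Set.Icc (-C) C) := by
    rw [Ultrafilter.coe_map, le_principal_iff, mem_map]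
    filter_upwards with n
    exact abs_le.1 (hf n)
  obtain ⟨L, hL1, hL2⟩ := (isCompact_Icc).ultrafilter_le_nhds (Ultrafilter.map f U) h1
  exact ⟨L, abs_le.2 hL1, by rwa [Ultrafilter.coe_map] at hL2⟩

variable {H : Type*} [NormedAddCommGroup H] [InnerProductSpace ℝ H] [CompleteSpace H]

lemma weak_ultra (x : ℕ → H) (C : ℝ) (hx : ∀ n, ‖x n‖ ≤ C) (U : Ultrafilter ℕ) :
    ∃ b : H, ∀ y : H, Tendsto (fun n => ⟪x n, y⟫) (↑U) (nhds ⟪b, y⟫) := by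
  have key : ∀ y : H, ∃ L, |L| ≤ C * ‖y‖ ∧ Tendsto (fun n => ⟪x n, y⟫) (↑U) (nhds L) := by
    intro y
    refine ultra_lim_exists _ (C * ‖y‖) (fun n => ?_) U
    exact (abs_real_inner_le_norm _ _).trans
      (mul_le_mul_of_nonneg_right (hx n) (norm_nonneg _))
  choose φ hφb hφ using key
  have hadd : ∀ y₁ y₂, φ (y₁ + y₂) = φ y₁ + φ y₂ := by
    intro y₁ y₂
    refine tendsto_nhds_unique (hφ _) ?_
    have := (hφ y₁).add (hφ y₂)
    simpa [inner_add_right] using this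
  have hsmul : ∀ (c : ℝ) (y : H), φ (c • y) = c * φ y := by
    intro c y
    refine tendsto_nhds_unique (hφ _) ?_
    have := (hφ y).const_mul c
    simpa [real_inner_smul_right] using this
  let Φ : H →ₗ[ℝ] ℝ :=
    { toFun := φ, map_add' := hadd, map_smul' := hsmul }
  let Φc : H →L[ℝ] ℝ := Φ.mkContinuous C (fun y => by
    rw [Real.norm_eq_abs]; exact hφb y)
  refine ⟨(InnerProductSpace.toDual ℝ H).symm Φc, fun y => ?_⟩
  have h2 : ⟪(InnerProductSpace.toDual ℝ H).symm Φc, y⟫ = Φc y :=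
    InnerProductSpace.toDual_symm_apply
  rw [h2]
  exact hφ y

lemma demiclosed (S : H → H) (hS : ∀ x y : H, ‖S x - S y‖ ≤ ‖x - y‖)
    (x : ℕ → H) (C : ℝ) (hx : ∀ n, ‖x n‖ ≤ C) (U : Ultrafilter ℕ) (b : H)
    (hw : ∀ y : H, Tendsto (fun n => ⟪x n, y⟫) (↑U) (nhds ⟪b, y⟫))
    (hreg : Tendsto (fun n => ‖x n - S (x n)‖) (↑U) (nhds 0)) : S b = b := by
  set e : ℕ → ℝ := fun n => ‖x n - S (x n)‖ with he
  have key : ∀ n, 2 * ⟪x n, b - S b⟫ + ‖S b‖^2 - ‖b‖^2 ≤ e n * (e n + 2 * (C + ‖b‖)) := by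
    intro n
    have h1 : ‖x n - S b‖ ≤ e n + ‖x n - b‖ := by
      calc ‖x n - S b‖ ≤ ‖x n - S (x n)‖ + ‖S (x n) - S b‖ := by
            have := norm_add_le (x n - S (x n)) (S (x n) - S b)
            simpa using this
        _ ≤ e n + ‖x n - b‖ := add_le_add le_rfl (hS _ _)
    have h2 : ‖x n - b‖ ≤ C + ‖b‖ := by
      calc ‖x n - b‖ ≤ ‖x n‖ + ‖b‖ := norm_sub_le _ _
        _ ≤ C + ‖b‖ := by linarith [hx n]
    have h3 : ‖x n - S b‖^2 ≤ (e n + ‖x n - b‖)^2 :=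
      pow_le_pow_left₀ (norm_nonneg _) h1 2
    have h4 : ‖x n - S b‖^2 = ‖x n‖^2 - 2*⟪x n, S b⟫ + ‖S b‖^2 := norm_sub_sq_real _ _
    have h5 : ‖x n - b‖^2 = ‖x n‖^2 - 2*⟪x n, b⟫ + ‖b‖^2 := norm_sub_sq_real _ _
    have h6 : ⟪x n, b - S b⟫ = ⟪x n, b⟫ - ⟪x n, S b⟫ := inner_sub_right _ _ _
    have he0 : 0 ≤ e n := norm_nonneg _
    nlinarith [norm_nonneg (x n - b)]
  have hlhs : Tendsto (fun n => 2 * ⟪x n, b - S b⟫ + ‖S b‖^2 - ‖b‖^2) (↑U)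
      (nhds (2 * ⟪b, b - S b⟫ + ‖S b‖^2 - ‖b‖^2)) :=
    (((hw (b - S b)).const_mul 2).add_const _).sub_const _
  have hrhs : Tendsto (fun n => e n * (e n + 2 * (C + ‖b‖))) (↑U) (nhds 0) := by
    have := hreg.mul (hreg.add_const (2 * (C + ‖b‖)))
    simpa using this
  have hle := le_of_tendsto_of_tendsto' hlhs hrhs key
  have hexp : 2 * ⟪b, b - S b⟫ + ‖S b‖^2 - ‖b‖^2 = ‖b - S b‖^2 := by
    have h1 : ‖b - S b‖^2 = ‖b‖^2 - 2*⟪b, S b⟫ + ‖S b‖^2 := norm_sub_sq_real _ _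
    have h2 : ⟪b, b - S b⟫ = ⟪b, b⟫ - ⟪b, S b⟫ := inner_sub_right _ _ _
    have h3 : ⟪b, b⟫ = ‖b‖^2 := real_inner_self_eq_norm_sq _
    linarith
  rw [hexp] at hle
  have : ‖b - S b‖ = 0 := by nlinarith [norm_nonneg (b - S b)]
  exact (norm_sub_eq_zero_iff.1 this).symm

lemma exists_vi (S : H → H) (hS : ∀ x y : H, ‖S x - S y‖ ≤ ‖x - y‖)
    (hfix : ∃ p : H, S p = p)
    (Q : H → H) (α : ℝ) (hα0 : 0 < α) (hα1 : α < 1)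
    (hQ : ∀ x y : H, ‖Q x - Q y‖ ≤ α * ‖x - y‖) :
    ∃ z : H, S z = z ∧ ∀ w : H, S w = w → ⟪z - Q z, w - z⟫ ≥ 0 := by
  obtain ⟨p, hp⟩ := hfix
  have hα0' : (0:ℝ) ≤ α := le_of_lt hα0
  set τ : ℕ → ℝ := fun n => ((n:ℝ) + 2)⁻¹ with hτdef
  have hτ0 : ∀ n, 0 < τ n := fun n => by positivity
  have hτ1 : ∀ n, τ n < 1 := by
    intro n
    rw [hτdef]
    have h2 : (1:ℝ) < (n:ℝ) + 2 := by
      have := Nat.cast_nonneg (α := ℝ) n; linarith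
    simpa using inv_lt_one_of_one_lt₀ h2
  have hpath : ∀ n : ℕ, ∃ g : H, g = τ n • Q g + (1 - τ n) • S g := by
    intro n
    set t : ℝ := τ n
    have ht0 : 0 < t := hτ0 n
    have ht1 : t < 1 := hτ1 n
    set T : H → H := fun w => t • Q w + (1 - t) • S w with hT
    set c : ℝ := 1 - t * (1 - α) with hc
    have hc0 : 0 ≤ c := by nlinarith
    have hc1 : c < 1 := by nlinarith
    have hlip : LipschitzWith c.toNNReal T := by
      apply LipschitzWith.of_dist_le_mul
      intro w v
      have hcoe : (c.toNNReal : ℝ) = c := Real.coe_toNNReal _ hc0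
      rw [hcoe, dist_eq_norm, dist_eq_norm]
      have h1 : T w - T v = t • (Q w - Q v) + (1 - t) • (S w - S v) := by
        simp only [hT]; module
      calc ‖T w - T v‖ ≤ ‖t • (Q w - Q v)‖ + ‖(1 - t) • (S w - S v)‖ := by
            rw [h1]; exact norm_add_le _ _
        _ = t * ‖Q w - Q v‖ + (1 - t) * ‖S w - S v‖ := by
            rw [norm_smul, norm_smul, Real.norm_eq_abs, Real.norm_eq_abs,
              abs_of_pos ht0, abs_of_pos (by linarith)]
        _ ≤ t * (α * ‖w - v‖) + (1 - t) * ‖w - v‖ := by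
            refine add_le_add (mul_le_mul_of_nonneg_left (hQ _ _) (le_of_lt ht0))
              (mul_le_mul_of_nonneg_left (hS _ _) (by linarith))
        _ = c * ‖w - v‖ := by rw [hc]; ring
    have hcontr : ContractingWith c.toNNReal T :=
      ⟨by rwa [← NNReal.coe_lt_one, Real.coe_toNNReal _ hc0], hlip⟩
    exact ⟨hcontr.fixedPoint T, (ContractingWith.fixedPoint_isFixedPt hcontr).symm⟩
  choose g hg using hpath
  set c₀ : ℝ := ‖Q p - p‖/(1-α) with hc₀
  have hbd : ∀ n, ‖g n - p‖ ≤ c₀ := by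
    intro n
    have ht0 := hτ0 n
    have ht1 := hτ1 n
    have h1 : g n - p = τ n • (Q (g n) - p) + (1 - τ n) • (S (g n) - p) := by
      nth_rewrite 1 [hg n]; module
    set t := τ n
    set w := g n with hwdef
    set r := ‖w - p‖ with hr
    have hr0 : 0 ≤ r := norm_nonneg _
    have h2 : ⟪w - p, w - p⟫ = t * ⟪Q w - p, w - p⟫ + (1 - t) * ⟪S w - p, w - p⟫ := by
      nth_rewrite 1 [h1]
      rw [inner_add_left, real_inner_smul_left, real_inner_smul_left]
    have h3 : ⟪S w - p, w - p⟫ ≤ r * r := by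
      calc ⟪S w - p, w - p⟫ ≤ ‖S w - p‖ * ‖w - p‖ := real_inner_le_norm _ _
        _ ≤ r * r := by
            refine mul_le_mul_of_nonneg_right ?_ hr0
            calc ‖S w - p‖ = ‖S w - S p‖ := by rw [hp]
              _ ≤ ‖w - p‖ := hS _ _
    have h4 : ⟪Q w - p, w - p⟫ ≤ α * r * r + ‖Q p - p‖ * r := by
      have e1 : Q w - p = (Q w - Q p) + (Q p - p) := by abel
      rw [e1, inner_add_left]
      have e2 : ⟪Q w - Q p, w - p⟫ ≤ α * r * r := by
        calc ⟪Q w - Q p, w - p⟫ ≤ ‖Q w - Q p‖ * ‖w - p‖ := real_inner_le_norm _ _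
          _ ≤ (α * ‖w - p‖) * ‖w - p‖ := mul_le_mul_of_nonneg_right (hQ _ _) hr0
          _ = α * r * r := by ring
      have e3 : ⟪Q p - p, w - p⟫ ≤ ‖Q p - p‖ * r := real_inner_le_norm _ _
      linarith
    have h5 : ⟪w - p, w - p⟫ = r * r := by
      rw [real_inner_self_eq_norm_sq]; ring
    have h6 : t * ((1 - α) * r * r) ≤ t * (‖Q p - p‖ * r) := by nlinarith
    have h7 : (1 - α) * r * r ≤ ‖Q p - p‖ * r := le_of_mul_le_mul_left h6 ht0
    have h8 : (1 - α) * r ≤ ‖Q p - p‖ := by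
      rcases eq_or_lt_of_le hr0 with h | h
      · rw [← h]; simp [norm_nonneg]
      · exact (mul_le_mul_iff_of_pos_right h).1 (by linarith : ((1 - α) * r) * r ≤ ‖Q p - p‖ * r)
    rw [hc₀, le_div_iff₀ (by linarith : (0:ℝ) < 1 - α)]
    linarith
  have hK : ∀ n, ‖Q (g n) - S (g n)‖ ≤ α * c₀ + ‖Q p - p‖ + c₀ := by
    intro n
    calc ‖Q (g n) - S (g n)‖ ≤ ‖Q (g n) - Q p‖ + ‖Q p - p‖ + ‖p - S (g n)‖ := by
          have := norm_add₃_le (a := Q (g n) - Q p) (b := Q p - p) (c := p - S (g n))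
          simpa using this
      _ ≤ α * c₀ + ‖Q p - p‖ + c₀ := by
          refine add_le_add (add_le_add ?_ le_rfl) ?_
          · calc ‖Q (g n) - Q p‖ ≤ α * ‖g n - p‖ := hQ _ _
              _ ≤ α * c₀ := mul_le_mul_of_nonneg_left (hbd n) hα0'
          · calc ‖p - S (g n)‖ = ‖S p - S (g n)‖ := by rw [hp]
              _ ≤ ‖p - g n‖ := hS _ _
              _ = ‖g n - p‖ := by rw [norm_sub_rev]
              _ ≤ c₀ := hbd n
  have hτlim : Tendsto τ atTop (nhds 0) := by
    apply Filter.Tendsto.inv_tendsto_atTop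
    exact tendsto_atTop_add_const_right _ 2 tendsto_natCast_atTop_atTop
  have hreg : Tendsto (fun n => ‖g n - S (g n)‖) atTop (nhds 0) := by
    have hb : ∀ n, ‖g n - S (g n)‖ ≤ τ n * (α * c₀ + ‖Q p - p‖ + c₀) := by
      intro n
      have h1 : g n - S (g n) = τ n • (Q (g n) - S (g n)) := by
        nth_rewrite 1 [hg n]; module
      rw [h1, norm_smul, Real.norm_eq_abs, abs_of_pos (hτ0 n)]
      exact mul_le_mul_of_nonneg_left (hK n) (le_of_lt (hτ0 n))
    have h2 : Tendsto (fun n => τ n * (α * c₀ + ‖Q p - p‖ + c₀)) atTop (nhds 0) := by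
      simpa using hτlim.mul_const _
    exact squeeze_zero (fun n => norm_nonneg _) hb h2
  have hVI : ∀ n, ∀ w : H, S w = w → ⟪g n - Q (g n), w - g n⟫ ≥ 0 := by
    intro n w hw
    have ht0 := hτ0 n
    have ht1 := hτ1 n
    have h1 : g n - w = τ n • (Q (g n) - w) + (1 - τ n) • (S (g n) - w) := by
      nth_rewrite 1 [hg n]; module
    set v := g n with hvdef
    set t := τ n
    have h2 : ⟪v - w, v - w⟫ = t * ⟪Q v - w, v - w⟫ + (1 - t) * ⟪S v - w, v - w⟫ := by
      nth_rewrite 1 [h1]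
      rw [inner_add_left, real_inner_smul_left, real_inner_smul_left]
    have h3 : ⟪S v - w, v - w⟫ ≤ ‖v - w‖ * ‖v - w‖ := by
      calc ⟪S v - w, v - w⟫ ≤ ‖S v - w‖ * ‖v - w‖ := real_inner_le_norm _ _
        _ ≤ ‖v - w‖ * ‖v - w‖ := by
            refine mul_le_mul_of_nonneg_right ?_ (norm_nonneg _)
            calc ‖S v - w‖ = ‖S v - S w‖ := by rw [hw]
              _ ≤ ‖v - w‖ := hS _ _
    have h4 : ⟪v - w, v - w⟫ = ‖v - w‖ * ‖v - w‖ := by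
      rw [real_inner_self_eq_norm_sq]; ring
    have h5 : ⟪v - w, v - w⟫ ≤ ⟪Q v - w, v - w⟫ := by nlinarith
    have h6 : ⟪Q v - w, v - w⟫ - ⟪v - w, v - w⟫ = ⟪Q v - v, v - w⟫ := by
      rw [← inner_sub_left]
      congr 1
      abel
    have h7 : (0:ℝ) ≤ ⟪Q v - v, v - w⟫ := by rw [← h6]; linarith
    have h8 : ⟪v - Q v, w - v⟫ = ⟪Q v - v, v - w⟫ := by
      rw [show v - Q v = -(Q v - v) by abel, show w - v = -(v - w) by abel,
        inner_neg_neg]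
    rw [ge_iff_le, h8]
    exact h7
  obtain ⟨U, hU⟩ := exists_ultrafilter_le (atTop : Filter ℕ)
  have hgbd : ∀ n, ‖g n‖ ≤ c₀ + ‖p‖ := fun n => by
    calc ‖g n‖ = ‖(g n - p) + p‖ := by rw [sub_add_cancel]
      _ ≤ ‖g n - p‖ + ‖p‖ := norm_add_le _ _
      _ ≤ c₀ + ‖p‖ := add_le_add (hbd n) le_rfl
  obtain ⟨b, hb⟩ := weak_ultra g (c₀ + ‖p‖) hgbd U
  have hSb : S b = b := demiclosed S hS g (c₀ + ‖p‖) hgbd U b hb (hreg.mono_left hU)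
  have hstrong : Tendsto g (↑U) (nhds b) := by
    have h1 : ∀ n, (1 - α) * ‖g n - b‖^2 ≤ ⟪Q b - b, g n - b⟫ := by
      intro n
      have hvi := hVI n b hSb
      have e1 : (0:ℝ) ≤ ⟪g n - Q (g n), b - g n⟫ := hvi
      have e1' : ⟪g n - Q (g n), g n - b⟫ ≤ 0 := by
        have : ⟪g n - Q (g n), b - g n⟫ = -⟪g n - Q (g n), g n - b⟫ := by
          rw [show b - g n = -(g n - b) by abel, inner_neg_right]
        linarith [this ▸ e1]
      have h2 : ⟪g n - b, g n - b⟫ ≤ ⟪Q (g n) - b, g n - b⟫ := by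
        have e2 : ⟪Q (g n) - b, g n - b⟫ - ⟪g n - b, g n - b⟫
            = -⟪g n - Q (g n), g n - b⟫ := by
          rw [← inner_neg_left, ← inner_sub_left]
          congr 1
          abel
        linarith
      have h3 : ⟪Q (g n) - b, g n - b⟫ = ⟪Q (g n) - Q b, g n - b⟫ + ⟪Q b - b, g n - b⟫ := by
        rw [← inner_add_left]; congr 1; abel
      have h4 : ⟪Q (g n) - Q b, g n - b⟫ ≤ α * ‖g n - b‖^2 := by
        calc ⟪Q (g n) - Q b, g n - b⟫ ≤ ‖Q (g n) - Q b‖ * ‖g n - b‖ := real_inner_le_norm _ _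
          _ ≤ (α * ‖g n - b‖) * ‖g n - b‖ := mul_le_mul_of_nonneg_right (hQ _ _) (norm_nonneg _)
          _ = α * ‖g n - b‖^2 := by ring
      have h5 : ⟪g n - b, g n - b⟫ = ‖g n - b‖^2 := real_inner_self_eq_norm_sq _
      linarith
    have h2 : Tendsto (fun n => ⟪Q b - b, g n - b⟫) (↑U) (nhds 0) := by
      have e1 : ∀ n, ⟪Q b - b, g n - b⟫ = ⟪g n, Q b - b⟫ - ⟪b, Q b - b⟫ := by
        intro n
        rw [real_inner_comm, inner_sub_left]
      simp_rw [e1]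
      have := (hb (Q b - b)).sub_const ⟪b, Q b - b⟫
      simpa using this
    have h3 : Tendsto (fun n => ‖g n - b‖^2) (↑U) (nhds 0) := by
      refine squeeze_zero (g := fun n => ⟪Q b - b, g n - b⟫ / (1 - α))
        (fun n => by positivity) (fun n => ?_) ?_
      · exact (le_div_iff₀ (by linarith : (0:ℝ) < 1 - α)).2
          (by linarith [h1 n] : ‖g n - b‖^2 * (1-α) ≤ ⟪Q b - b, g n - b⟫)
      · have := h2.div_const (1 - α)
        simpa using this
    have h4 : Tendsto (fun n => ‖g n - b‖) (↑U) (nhds 0) := by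
      have := h3.sqrt
      simpa [Real.sqrt_sq (norm_nonneg _)] using this
    exact tendsto_iff_norm_sub_tendsto_zero.2 h4
  have hQcont : Continuous Q := by
    have : LipschitzWith α.toNNReal Q := by
      apply LipschitzWith.of_dist_le_mul
      intro u v
      rw [Real.coe_toNNReal _ hα0', dist_eq_norm, dist_eq_norm]
      exact hQ _ _
    exact this.continuous
  refine ⟨b, hSb, fun w hw => ?_⟩
  have hcont : Continuous (fun v : H => ⟪v - Q v, w - v⟫) := by
    apply Continuous.inner
    · exact continuous_id.sub hQcont
    · exact continuous_const.sub continuous_id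
  have hlim : Tendsto (fun n => ⟪g n - Q (g n), w - g n⟫) (↑U) (nhds ⟪b - Q b, w - b⟫) :=
    (hcont.tendsto b).comp hstrong
  exact ge_of_tendsto hlim (Eventually.of_forall (fun n => hVI n w hw))

end Helpers


set_option maxHeartbeats 2000000 in
theorem stmt_13 {H : Type*} [NormedAddCommGroup H] [InnerProductSpace ℝ H] [CompleteSpace H]
    (S : H → H) (hS : ∀ x y : H, ‖S x - S y‖ ≤ ‖x - y‖)
    (hfix : ∃ p : H, S p = p)
    (Q : H → H) (α : ℝ) (hα0 : 0 < α) (hα1 : α < 1)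
    (hQ : ∀ x y : H, ‖Q x - Q y‖ ≤ α * ‖x - y‖)
    (a : ℕ → ℝ) (ha : ∀ n, a n ∈ Set.Ioo (0 : ℝ) 1)
    (ha0 : Filter.Tendsto a Filter.atTop (nhds 0))
    (hasum : ¬ Summable a)
    (hadiff : Summable (fun n => |a (n + 1) - a n|))
    (x : ℕ → H)
    (hrec : ∀ n, x (n + 1)
      = a n • Q (x n) + (1 - a n) • S ((2 : ℝ)⁻¹ • (x n + x (n + 1)))) :
    ∃ z : H, (S z = z ∧ ∀ w : H, S w = w → ⟪z - Q z, w - z⟫ ≥ 0)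
      ∧ Filter.Tendsto x Filter.atTop (nhds z)
      ∧ ∀ z' : H, (S z' = z' ∧ ∀ w : H, S w = w → ⟪z' - Q z', w - z'⟫ ≥ 0) → z' = z := by
  obtain ⟨z, hzfix, hzVI⟩ := exists_vi S hS hfix Q α hα0 hα1 hQ
  have hα0' : (0:ℝ) ≤ α := hα0.le
  have h1α : (0:ℝ) < 1 - α := by linarith
  set y : ℕ → H := fun n => (2:ℝ)⁻¹ • (x n + x (n + 1)) with hy
  have hrec' : ∀ n, x (n+1) = a n • Q (x n) + (1 - a n) • S (y n) := hrec
  -- norms of midpoints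
  have hynorm : ∀ n (w : H), ‖y n - w‖ ≤ (‖x n - w‖ + ‖x (n+1) - w‖)/2 := by
    intro n w
    have h1 : y n - w = (2:ℝ)⁻¹ • ((x n - w) + (x (n+1) - w)) := by
      simp only [hy]; module
    rw [h1, norm_smul]
    have : ‖((2:ℝ)⁻¹ : ℝ)‖ = 1/2 := by norm_num
    rw [this]
    calc 1/2 * ‖(x n - w) + (x (n+1) - w)‖ ≤ 1/2 * (‖x n - w‖ + ‖x (n+1) - w‖) := by
          have := norm_add_le (x n - w) (x (n+1) - w)
          linarith
      _ = (‖x n - w‖ + ‖x (n+1) - w‖)/2 := by ring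
  -- decomposition identity
  have hxz : ∀ n (w : H), x (n+1) - w = a n • (Q (x n) - w) + (1 - a n) • (S (y n) - w) := by
    intro n w
    nth_rewrite 1 [hrec' n]; module
  -- boundedness
  obtain ⟨M, hM0, hMx0, hMc⟩ : ∃ M : ℝ, 0 ≤ M ∧ ‖x 0 - z‖ ≤ M ∧ ‖Q z - z‖ ≤ (1-α) * M := by
    refine ⟨max ‖x 0 - z‖ (‖Q z - z‖/(1-α)), le_trans (norm_nonneg _) (le_max_left _ _),
      le_max_left _ _, ?_⟩
    have h := le_max_right ‖x 0 - z‖ (‖Q z - z‖/(1-α))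
    rw [div_le_iff₀ h1α] at h
    linarith
  have hbd : ∀ n, ‖x n - z‖ ≤ M := by
    intro n
    induction n with
    | zero => exact hMx0
    | succ n ih =>
      have han := ha n
      have h1 : ‖x (n+1) - z‖ ≤ a n * ‖Q (x n) - z‖ + (1 - a n) * ‖S (y n) - z‖ := by
        rw [hxz n z]
        calc ‖a n • (Q (x n) - z) + (1 - a n) • (S (y n) - z)‖
            ≤ ‖a n • (Q (x n) - z)‖ + ‖(1 - a n) • (S (y n) - z)‖ := norm_add_le _ _
          _ = a n * ‖Q (x n) - z‖ + (1 - a n) * ‖S (y n) - z‖ := by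
              rw [norm_smul, norm_smul, Real.norm_eq_abs, Real.norm_eq_abs,
                abs_of_pos han.1, abs_of_pos (by linarith [han.2])]
      have h2 : ‖Q (x n) - z‖ ≤ α * ‖x n - z‖ + ‖Q z - z‖ := by
        calc ‖Q (x n) - z‖ ≤ ‖Q (x n) - Q z‖ + ‖Q z - z‖ := by
              have := norm_add_le (Q (x n) - Q z) (Q z - z)
              simpa using this
          _ ≤ α * ‖x n - z‖ + ‖Q z - z‖ := add_le_add (hQ _ _) le_rfl
      have h3 : ‖S (y n) - z‖ ≤ (‖x n - z‖ + ‖x (n+1) - z‖)/2 := by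
        calc ‖S (y n) - z‖ = ‖S (y n) - S z‖ := by rw [hzfix]
          _ ≤ ‖y n - z‖ := hS _ _
          _ ≤ _ := hynorm n z
      nlinarith [norm_nonneg (x (n+1) - z), norm_nonneg (x n - z), han.1, han.2,
        mul_nonneg han.1.le (sub_nonneg.2 ih),
        mul_nonneg (mul_nonneg han.1.le h1α.le) (sub_nonneg.2 ih)]
  have hxbd : ∀ n, ‖x n‖ ≤ M + ‖z‖ := by
    intro n
    calc ‖x n‖ = ‖(x n - z) + z‖ := by rw [sub_add_cancel]
      _ ≤ ‖x n - z‖ + ‖z‖ := norm_add_le _ _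
      _ ≤ M + ‖z‖ := add_le_add (hbd n) le_rfl
  obtain ⟨K, hK0, hQbd, hSybd⟩ : ∃ K : ℝ, 0 ≤ K ∧ (∀ n, ‖Q (x n)‖ ≤ K)
      ∧ (∀ n, ‖S (y n)‖ ≤ K) := by
    refine ⟨max (α * M + ‖Q z‖) (M + ‖z‖), ?_, fun n => ?_, fun n => ?_⟩
    · exact le_trans (by positivity) (le_max_left _ _)
    · refine le_trans ?_ (le_max_left _ _)
      calc ‖Q (x n)‖ = ‖(Q (x n) - Q z) + Q z‖ := by rw [sub_add_cancel]
        _ ≤ ‖Q (x n) - Q z‖ + ‖Q z‖ := norm_add_le _ _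
        _ ≤ α * M + ‖Q z‖ := by
            refine add_le_add ?_ le_rfl
            calc ‖Q (x n) - Q z‖ ≤ α * ‖x n - z‖ := hQ _ _
              _ ≤ α * M := mul_le_mul_of_nonneg_left (hbd n) hα0'
    · refine le_trans ?_ (le_max_right _ _)
      calc ‖S (y n)‖ = ‖(S (y n) - S z) + S z‖ := by rw [sub_add_cancel]
        _ ≤ ‖S (y n) - S z‖ + ‖S z‖ := norm_add_le _ _
        _ ≤ M + ‖z‖ := by
            refine add_le_add ?_ (le_of_eq (by rw [hzfix]))
            calc ‖S (y n) - S z‖ ≤ ‖y n - z‖ := hS _ _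
              _ ≤ (‖x n - z‖ + ‖x (n+1) - z‖)/2 := hynorm n z
              _ ≤ M := by linarith [hbd n, hbd (n+1)]
  -- difference recursion
  have hdrec : ∀ n, ‖x (n+2) - x (n+1)‖ ≤ (1 - (1-α) * a (n+1)) * ‖x (n+1) - x n‖
      + 4*K*|a (n+1) - a n| := by
    intro n
    have han := ha n
    have han1 := ha (n+1)
    have hsplit : x (n+2) - x (n+1)
        = a (n+1) • (Q (x (n+1)) - Q (x n)) + (a (n+1) - a n) • (Q (x n))
          + (1 - a (n+1)) • (S (y (n+1)) - S (y n)) + (a n - a (n+1)) • (S (y n)) := by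
      have e1 := hrec' (n+1)
      have e2 := hrec' n
      rw [show n + 2 = (n+1) + 1 by ring, e1]
      nth_rewrite 2 [e2]
      module
    have hyy : ‖y (n+1) - y n‖ ≤ (‖x (n+1) - x n‖ + ‖x (n+2) - x (n+1)‖)/2 := by
      have h1 : y (n+1) - y n = (2:ℝ)⁻¹ • ((x (n+1) - x n) + (x (n+2) - x (n+1))) := by
        simp only [hy]
        have : n + 1 + 1 = n + 2 := by ring
        rw [this]
        module
      rw [h1, norm_smul]
      have h2 : ‖((2:ℝ)⁻¹ : ℝ)‖ = 1/2 := by norm_num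
      rw [h2]
      have := norm_add_le (x (n+1) - x n) (x (n+2) - x (n+1))
      linarith
    have hnorm : ‖x (n+2) - x (n+1)‖ ≤ a (n+1) * (α * ‖x (n+1) - x n‖)
        + |a (n+1) - a n| * K
        + (1 - a (n+1)) * ((‖x (n+1) - x n‖ + ‖x (n+2) - x (n+1)‖)/2)
        + |a (n+1) - a n| * K := by
      have t1 : ‖a (n+1) • (Q (x (n+1)) - Q (x n))‖ ≤ a (n+1) * (α * ‖x (n+1) - x n‖) := by
        rw [norm_smul, Real.norm_eq_abs, abs_of_pos han1.1]
        exact mul_le_mul_of_nonneg_left (hQ _ _) han1.1.le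
      have t2 : ‖(a (n+1) - a n) • (Q (x n))‖ ≤ |a (n+1) - a n| * K := by
        rw [norm_smul, Real.norm_eq_abs]
        exact mul_le_mul_of_nonneg_left (hQbd n) (abs_nonneg _)
      have t3 : ‖(1 - a (n+1)) • (S (y (n+1)) - S (y n))‖
          ≤ (1 - a (n+1)) * ((‖x (n+1) - x n‖ + ‖x (n+2) - x (n+1)‖)/2) := by
        rw [norm_smul, Real.norm_eq_abs, abs_of_pos (by linarith [han1.2])]
        refine mul_le_mul_of_nonneg_left ?_ (by linarith [han1.2])
        exact le_trans (hS _ _) hyy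
      have t4 : ‖(a n - a (n+1)) • (S (y n))‖ ≤ |a (n+1) - a n| * K := by
        rw [norm_smul, Real.norm_eq_abs, abs_sub_comm]
        exact mul_le_mul_of_nonneg_left (hSybd n) (abs_nonneg _)
      calc ‖x (n+2) - x (n+1)‖
          = ‖a (n+1) • (Q (x (n+1)) - Q (x n)) + (a (n+1) - a n) • (Q (x n))
            + (1 - a (n+1)) • (S (y (n+1)) - S (y n)) + (a n - a (n+1)) • (S (y n))‖ := by
            rw [hsplit]
        _ ≤ ‖a (n+1) • (Q (x (n+1)) - Q (x n)) + (a (n+1) - a n) • (Q (x n))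
            + (1 - a (n+1)) • (S (y (n+1)) - S (y n))‖ + ‖(a n - a (n+1)) • (S (y n))‖ :=
            norm_add_le _ _
        _ ≤ ‖a (n+1) • (Q (x (n+1)) - Q (x n)) + (a (n+1) - a n) • (Q (x n))‖
            + ‖(1 - a (n+1)) • (S (y (n+1)) - S (y n))‖ + ‖(a n - a (n+1)) • (S (y n))‖ := by
            have := norm_add_le (a (n+1) • (Q (x (n+1)) - Q (x n)) + (a (n+1) - a n) • (Q (x n)))
              ((1 - a (n+1)) • (S (y (n+1)) - S (y n)))
            linarith
        _ ≤ ‖a (n+1) • (Q (x (n+1)) - Q (x n))‖ + ‖(a (n+1) - a n) • (Q (x n))‖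
            + ‖(1 - a (n+1)) • (S (y (n+1)) - S (y n))‖ + ‖(a n - a (n+1)) • (S (y n))‖ := by
            have := norm_add_le (a (n+1) • (Q (x (n+1)) - Q (x n))) ((a (n+1) - a n) • (Q (x n)))
            linarith
        _ ≤ _ := add_le_add (add_le_add (add_le_add t1 t2) t3) t4
    have habs : 0 ≤ |a (n+1) - a n| := abs_nonneg _
    have hd0 : 0 ≤ ‖x (n+1) - x n‖ := norm_nonneg _
    have hd1 : 0 ≤ ‖x (n+2) - x (n+1)‖ := norm_nonneg _
    have hstep : (1 + a (n+1)) * ‖x (n+2) - x (n+1)‖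
        ≤ (1 - a (n+1) + 2 * a (n+1) * α) * ‖x (n+1) - x n‖ + 4*(|a (n+1) - a n|)*K := by
      nlinarith [hnorm]
    have hfact : (1 + a (n+1)) * ‖x (n+2) - x (n+1)‖
        ≤ (1 + a (n+1)) * ((1 - (1-α) * a (n+1)) * ‖x (n+1) - x n‖ + 4*K*|a (n+1) - a n|) := by
      nlinarith [hstep,
        mul_nonneg (mul_nonneg (mul_nonneg han1.1.le h1α.le)
          (by linarith [han1.2] : (0:ℝ) ≤ 1 - a (n+1))) hd0,
        mul_nonneg (mul_nonneg han1.1.le habs) hK0]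
    exact le_of_mul_le_mul_left hfact (by linarith [han1.1] : (0:ℝ) < 1 + a (n+1))
  -- d tends to zero
  have hd : Tendsto (fun n => ‖x (n+1) - x n‖) atTop (nhds 0) := by
    refine xu_lemma (fun n => ‖x (n+1) - x n‖) (fun n => (1-α) * a (n+1)) (fun _ => 0)
      (fun n => 4*K*|a (n+1) - a n|)
      (fun n => norm_nonneg _)
      (fun n => mul_nonneg h1α.le (ha (n+1)).1.le)
      (fun n => ?_) ?_ (fun ε hε => Eventually.of_forall (fun n => hε.le))
      (fun n => by positivity) (hadiff.mul_left (4*K)) (fun n => ?_)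
    · show (1-α) * a (n+1) ≤ 1
      nlinarith [(ha (n+1)).1, (ha (n+1)).2, mul_nonneg hα0' (ha (n+1)).1.le]
    · intro hcon
      have h1 : Summable (fun n => (1-α)⁻¹ * ((1-α) * a (n+1))) := hcon.mul_left _
      have h2 : Summable (fun n => a (n+1)) := by
        refine h1.congr (fun n => ?_)
        field_simp
      exact hasum ((summable_nat_add_iff 1).1 h2)
    · have := hdrec n
      simpa using this
  -- regularity of x
  have hereg : Tendsto (fun n => ‖x n - S (x n)‖) atTop (nhds 0) := by
    have hb : ∀ n, ‖x n - S (x n)‖ ≤ (3/2) * ‖x (n+1) - x n‖ + a n * (2*K) := by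
      intro n
      have han := ha n
      have e1 : x n - S (x n) = (x n - x (n+1)) + (x (n+1) - S (y n)) + (S (y n) - S (x n)) := by
        abel
      have e2 : x (n+1) - S (y n) = a n • (Q (x n) - S (y n)) := by
        nth_rewrite 1 [hrec' n]; module
      have t1 : ‖x n - x (n+1)‖ = ‖x (n+1) - x n‖ := norm_sub_rev _ _
      have t2 : ‖x (n+1) - S (y n)‖ ≤ a n * (2*K) := by
        rw [e2, norm_smul, Real.norm_eq_abs, abs_of_pos han.1]
        refine mul_le_mul_of_nonneg_left ?_ han.1.le
        calc ‖Q (x n) - S (y n)‖ ≤ ‖Q (x n)‖ + ‖S (y n)‖ := norm_sub_le _ _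
          _ ≤ 2*K := by linarith [hQbd n, hSybd n]
      have t3 : ‖S (y n) - S (x n)‖ ≤ (1/2) * ‖x (n+1) - x n‖ := by
        calc ‖S (y n) - S (x n)‖ ≤ ‖y n - x n‖ := hS _ _
          _ = (1/2) * ‖x (n+1) - x n‖ := by
              have h1 : y n - x n = (2:ℝ)⁻¹ • (x (n+1) - x n) := by
                simp only [hy]; module
              rw [h1, norm_smul]
              norm_num
      calc ‖x n - S (x n)‖
          ≤ ‖x n - x (n+1)‖ + ‖x (n+1) - S (y n)‖ + ‖S (y n) - S (x n)‖ := by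
            rw [e1]
            have := norm_add₃_le (a := x n - x (n+1)) (b := x (n+1) - S (y n))
              (c := S (y n) - S (x n))
            simpa using this
        _ ≤ (3/2) * ‖x (n+1) - x n‖ + a n * (2*K) := by
            rw [t1]
            linarith [t2, t3]
    have hlim : Tendsto (fun n => (3/2) * ‖x (n+1) - x n‖ + a n * (2*K)) atTop (nhds 0) := by
      have := (hd.const_mul (3/2)).add (ha0.mul_const (2*K))
      simpa using this
    exact squeeze_zero (fun n => norm_nonneg _) hb hlim
  -- key eventual inequality
  have hE : ∀ (u : ℕ → H) (C : ℝ), (∀ n, ‖u n‖ ≤ C) →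
      Tendsto (fun n => ‖u n - S (u n)‖) atTop (nhds 0) →
      ∀ ε > 0, ∀ᶠ n in atTop, ⟪Q z - z, u n - z⟫ ≤ ε := by
    intro u C hC hu ε hε
    by_contra hcon
    rw [not_eventually] at hcon
    have hfreq : ∃ᶠ n in atTop, ε < ⟪Q z - z, u n - z⟫ := by
      refine hcon.mono (fun n hn => ?_)
      push_neg at hn
      exact hn
    have hne : ((atTop : Filter ℕ) ⊓ Filter.principal {n | ε < ⟪Q z - z, u n - z⟫}).NeBot :=
      frequently_iff_neBot.1 hfreq
    obtain ⟨U, hU⟩ := exists_ultrafilter_le _ (h := hne)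
    have hU1 : (↑U : Filter ℕ) ≤ atTop := le_trans hU inf_le_left
    have hU2 : ∀ᶠ n in (↑U : Filter ℕ), ε < ⟪Q z - z, u n - z⟫ := by
      have := le_trans hU inf_le_right
      rw [le_principal_iff] at this
      exact eventually_iff.2 this
    obtain ⟨b, hb⟩ := weak_ultra u C hC U
    have hSb : S b = b := demiclosed S hS u C hC U b hb (hu.mono_left hU1)
    have hlim : Tendsto (fun n => ⟪Q z - z, u n - z⟫) (↑U) (nhds ⟪Q z - z, b - z⟫) := by
      have e1 : ∀ n, ⟪Q z - z, u n - z⟫ = ⟪u n, Q z - z⟫ - ⟪z, Q z - z⟫ := by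
        intro n
        rw [real_inner_comm, inner_sub_left]
      have e2 : ⟪Q z - z, b - z⟫ = ⟪b, Q z - z⟫ - ⟪z, Q z - z⟫ := by
        rw [real_inner_comm, inner_sub_left]
      simp_rw [e1, e2]
      exact (hb (Q z - z)).sub_const _
    have hle : ε ≤ ⟪Q z - z, b - z⟫ := ge_of_tendsto hlim (hU2.mono (fun n hn => hn.le))
    have hVIb : ⟪z - Q z, b - z⟫ ≥ 0 := hzVI b hSb
    have : ⟪Q z - z, b - z⟫ = -⟪z - Q z, b - z⟫ := by
      rw [← inner_neg_left]
      congr 1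
      abel
    rw [this] at hle
    linarith
  -- final recursion
  obtain ⟨s, hs⟩ : ∃ s : ℕ → ℝ, ∀ n, s n = ⟪Q z - z, x (n+1) - z⟫ :=
    ⟨fun n => ⟪Q z - z, x (n+1) - z⟫, fun n => rfl⟩
  have hsev : ∀ ε > 0, ∀ᶠ n in atTop, s n ≤ ε := by
    intro ε hε
    have h := hE (fun n => x (n+1)) (M + ‖z‖) (fun n => hxbd (n+1))
      (hereg.comp (tendsto_add_atTop_nat 1)) ε hε
    refine h.mono (fun n hn => ?_)
    rw [hs n]
    exact hn
  have hfin : ∀ n, ‖x (n+1) - z‖^2 ≤ (1 - (1-α) * a n) * ‖x n - z‖^2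
      + ((1-α) * a n) * ((4/(1-α)) * max (s n) 0) + 0 := by
    intro n
    have han := ha n
    set A := a n with hA
    set u := ‖x n - z‖ with hu
    set v := ‖x (n+1) - z‖ with hv
    have hu0 : 0 ≤ u := norm_nonneg _
    have hv0 : 0 ≤ v := norm_nonneg _
    have hA0' : 0 ≤ A := by rw [hA]; exact han.1.le
    have hA1' : A ≤ 1 := by rw [hA]; exact han.2.le
    have h1A0 : (0:ℝ) ≤ 1 - A := by linarith
    have hsP : s n ≤ max (s n) 0 := le_max_left _ _
    have hsP0 : 0 ≤ max (s n) 0 := le_max_right _ _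
    have hbase : ⟪x (n+1) - z, x (n+1) - z⟫
        = A * ⟪Q (x n) - z, x (n+1) - z⟫ + (1 - A) * ⟪S (y n) - z, x (n+1) - z⟫ := by
      nth_rewrite 1 [hxz n z]
      rw [inner_add_left, real_inner_smul_left, real_inner_smul_left]
    have hself : ⟪x (n+1) - z, x (n+1) - z⟫ = v^2 := real_inner_self_eq_norm_sq _
    have hq : ⟪Q (x n) - z, x (n+1) - z⟫ ≤ α * u * v + s n := by
      have e1 : Q (x n) - z = (Q (x n) - Q z) + (Q z - z) := by abel
      rw [e1, inner_add_left]
      have e2 : ⟪Q (x n) - Q z, x (n+1) - z⟫ ≤ α * u * v := by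
        calc ⟪Q (x n) - Q z, x (n+1) - z⟫ ≤ ‖Q (x n) - Q z‖ * ‖x (n+1) - z‖ :=
              real_inner_le_norm _ _
          _ ≤ (α * u) * v := mul_le_mul_of_nonneg_right (hQ _ _) hv0
          _ = α * u * v := by ring
      have e3 : ⟪Q z - z, x (n+1) - z⟫ = s n := (hs n).symm
      linarith
    have hsy : ⟪S (y n) - z, x (n+1) - z⟫ ≤ ((u + v)/2) * v := by
      calc ⟪S (y n) - z, x (n+1) - z⟫ ≤ ‖S (y n) - z‖ * ‖x (n+1) - z‖ := real_inner_le_norm _ _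
        _ ≤ ((u + v)/2) * v := by
            refine mul_le_mul_of_nonneg_right ?_ hv0
            calc ‖S (y n) - z‖ = ‖S (y n) - S z‖ := by rw [hzfix]
              _ ≤ ‖y n - z‖ := hS _ _
              _ ≤ (u + v)/2 := hynorm n z
    have hbase' : v^2 ≤ A * (α * u * v + s n) + (1 - A) * (((u + v)/2) * v) := by
      rw [← hself, hbase]
      exact add_le_add (mul_le_mul_of_nonneg_left hq hA0')
        (mul_le_mul_of_nonneg_left hsy h1A0)
    have huv : u * v ≤ (u^2 + v^2)/2 := by nlinarith [sq_nonneg (u - v)]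
    have hcoeff : (0:ℝ) ≤ 4*A*α + 2*(1-A) := by nlinarith [mul_nonneg hA0' hα0']
    have hc := mul_le_mul_of_nonneg_left huv hcoeff
    have step2 : (1 + 3*A - 2*A*α) * v^2 ≤ (1 - A + 2*A*α) * u^2 + 4*A*(s n) := by
      ring_nf at hbase' hc ⊢
      linarith [hbase', hc]
    have h3A : (0:ℝ) ≤ 3 - A*(3 - 2*α) := by nlinarith [mul_nonneg hA0' hα0']
    have hpos : (0:ℝ) < 1 + 3*A - 2*A*α := by nlinarith [mul_nonneg hA0' hα0', mul_nonneg hA0' (by linarith : (0:ℝ) ≤ 3 - 2*α)]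
    have e1 : 0 ≤ A*(1-α)*(3 - A*(3-2*α))*u^2 :=
      mul_nonneg (mul_nonneg (mul_nonneg hA0' h1α.le) h3A) (sq_nonneg u)
    have e2 : 0 ≤ A*(max (s n) 0 - s n) := mul_nonneg hA0' (by linarith [hsP])
    have e3 : 0 ≤ (3-2*α)*(A*A)*(max (s n) 0) :=
      mul_nonneg (mul_nonneg (by linarith : (0:ℝ) ≤ 3-2*α) (mul_nonneg hA0' hA0')) hsP0
    have key : (1 + 3*A - 2*A*α) * v^2
        ≤ (1 + 3*A - 2*A*α) * ((1 - (1-α)*A) * u^2 + 4*A*(max (s n) 0)) := by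
      ring_nf at step2 e1 e2 e3 ⊢
      linarith [step2, e1, e2, e3]
    have hfin' : v^2 ≤ (1 - (1-α)*A) * u^2 + 4*A*(max (s n) 0) :=
      le_of_mul_le_mul_left key hpos
    have hcoe : ((1-α) * A) * ((4/(1-α)) * max (s n) 0) = 4*A*(max (s n) 0) := by
      field_simp
    rw [hcoe]
    linarith
  have hT2 : Tendsto (fun n => ‖x n - z‖^2) atTop (nhds 0) := by
    refine xu_lemma (fun n => ‖x n - z‖^2) (fun n => (1-α) * a n)
      (fun n => (4/(1-α)) * max (s n) 0) (fun _ => 0)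
      (fun n => sq_nonneg _)
      (fun n => mul_nonneg h1α.le (ha n).1.le)
      (fun n => ?_) ?_ ?_ (fun n => le_rfl) summable_zero hfin
    · show (1-α) * a n ≤ 1
      nlinarith [(ha n).1, (ha n).2, mul_nonneg hα0' (ha n).1.le]
    · intro hcon
      have h1 : Summable (fun n => (1-α)⁻¹ * ((1-α) * a n)) := hcon.mul_left _
      refine hasum (h1.congr (fun n => ?_))
      field_simp
    · intro ε hε
      have hε' : 0 < ε * (1-α)/4 := by positivity
      refine (hsev _ hε').mono (fun n hn => ?_)
      have h1 : max (s n) 0 ≤ ε * (1-α)/4 := max_le hn hε'.le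
      have h2 : (4/(1-α)) * max (s n) 0 ≤ (4/(1-α)) * (ε * (1-α)/4) :=
        mul_le_mul_of_nonneg_left h1 (by positivity)
      have h3 : (4/(1-α)) * (ε * (1-α)/4) = ε := by
        field_simp
      linarith
  have hxz2 : Tendsto x atTop (nhds z) := by
    have h1 : Tendsto (fun n => ‖x n - z‖) atTop (nhds 0) := by
      have := hT2.sqrt
      simpa [Real.sqrt_sq (norm_nonneg _)] using this
    exact tendsto_iff_norm_sub_tendsto_zero.2 h1
  refine ⟨z, ⟨hzfix, hzVI⟩, hxz2, ?_⟩
  rintro z' ⟨hz'fix, hz'VI⟩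
  have h1 : ⟪z - Q z, z' - z⟫ ≥ 0 := hzVI z' hz'fix
  have h2 : ⟪z' - Q z', z - z'⟫ ≥ 0 := hz'VI z hzfix
  have h3 : ⟪z' - Q z', z - z'⟫ = -⟪z' - Q z', z' - z⟫ := by
    rw [show z - z' = -(z' - z) by abel, inner_neg_right]
  have h4 : ⟪z - Q z, z' - z⟫ - ⟪z' - Q z', z' - z⟫
      = -⟪z' - z, z' - z⟫ + ⟪Q z' - Q z, z' - z⟫ := by
    rw [← inner_sub_left, ← inner_neg_left, ← inner_add_left]
    congr 1
    abel
  have h5 : ⟪Q z' - Q z, z' - z⟫ ≤ α * ‖z' - z‖^2 := by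
    calc ⟪Q z' - Q z, z' - z⟫ ≤ ‖Q z' - Q z‖ * ‖z' - z‖ := real_inner_le_norm _ _
      _ ≤ (α * ‖z' - z‖) * ‖z' - z‖ := mul_le_mul_of_nonneg_right (hQ _ _) (norm_nonneg _)
      _ = α * ‖z' - z‖^2 := by ring
  have h6 : ⟪z' - z, z' - z⟫ = ‖z' - z‖^2 := real_inner_self_eq_norm_sq _
  have h7 : ‖z' - z‖^2 ≤ 0 := by nlinarith
  have h8 : ‖z' - z‖ = 0 := by nlinarith [norm_nonneg (z' - z)]
  exact sub_eq_zero.1 (norm_eq_zero.1 h8)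
end
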